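/- Let G = C₉ × C₉. There exist four generating pairs of G whose Σ-sets have trivial intersection, and no three generating pairs of G have Σ-sets with trivial intersection. Hence the Beauville dimension of C₉ × C₉ is 4. -/
import Mathlib

set_option maxRecDepth 40000

def ASigma {G : Type*} [AddCommGroup G] (x y : G) : Set G :=
  (AddSubgroup.zmultiples x : Set G) ∪ (AddSubgroup.zmultiples y : Set G) ∪
    (AddSubgroup.zmultiples (x + y) : Set G)

section Aux

abbrev G9 := ZMod 9 × ZMod 9
abbrev G3 := ZMod 3 × ZMod 3

lemma smul_reduce {A : Type*} [AddCommGroup A] (k : ℕ) (hk : 0 < k) (x : A)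
    (hx : (k : ℤ) • x = 0) (n : ℤ) : ∃ m : Fin k, (m : ℕ) • x = n • x := by
  have hk' : (0 : ℤ) < k := by exact_mod_cast hk
  have h1 : 0 ≤ n % k := Int.emod_nonneg n (ne_of_gt hk')
  have h2 : n % k < k := Int.emod_lt_of_pos n hk'
  refine ⟨⟨(n % k).toNat, by omega⟩, ?_⟩
  have key : ((n % k).toNat : ℤ) • x = n • x := by
    rw [Int.toNat_of_nonneg h1]
    conv_rhs => rw [← Int.mul_ediv_add_emod n k]
    rw [add_zsmul, mul_comm, mul_zsmul, hx, smul_zero, zero_add]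
  rw [← natCast_zsmul]
  exact key

lemma nine_zsmul : ∀ x : G9, (9 : ℤ) • x = 0 := by decide

lemma three_zsmul : ∀ u : G3, (3 : ℤ) • u = 0 := by decide

lemma mem_zmul_iff (x g : G9) :
    g ∈ AddSubgroup.zmultiples x ↔ ∃ n : Fin 9, (n : ℕ) • x = g := by
  rw [AddSubgroup.mem_zmultiples_iff]
  constructor
  · rintro ⟨n, rfl⟩
    exact smul_reduce 9 (by norm_num) x (nine_zsmul x) n
  · rintro ⟨n, rfl⟩
    exact ⟨(n : ℕ), natCast_zsmul x (n : ℕ)⟩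

def SigP (x y g : G9) : Prop :=
  (∃ n : Fin 9, (n : ℕ) • x = g) ∨ (∃ n : Fin 9, (n : ℕ) • y = g) ∨
    (∃ n : Fin 9, (n : ℕ) • (x + y) = g)

instance (x y g : G9) : Decidable (SigP x y g) := by unfold SigP; infer_instance

lemma mem_ASigma_iff (x y g : G9) : g ∈ ASigma x y ↔ SigP x y g := by
  unfold ASigma SigP
  rw [Set.mem_union, Set.mem_union, SetLike.mem_coe, SetLike.mem_coe, SetLike.mem_coe,
    mem_zmul_iff, mem_zmul_iff, mem_zmul_iff, or_assoc]

/-- The reduction map to `G3`. -/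
def Fred : G9 →+ G3 :=
  AddMonoidHom.mk' (fun x => (((x.1.val : ZMod 3)), ((x.2.val : ZMod 3)))) (by decide)

/-- Lift of a `G3` element into `G9` (three times any preimage). -/
def iot (u : G3) : G9 := ((3 * u.1.val : ZMod 9), (3 * u.2.val : ZMod 9))

lemma iot_Fred : ∀ x : G9, iot (Fred x) = (3 : ℕ) • x := by decide

/-- The four reference points, one nonzero point on each line of `3G ≅ C3 × C3`. -/
def wpt : Fin 4 → G9 := ![(3, 0), (0, 3), (3, 3), (3, 6)]

def Q (u v : G3) (t : G9) : Prop :=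
  t = iot u ∨ t = (2 : ℕ) • iot u ∨ t = iot v ∨ t = (2 : ℕ) • iot v ∨
    t = iot (u + v) ∨ t = (2 : ℕ) • iot (u + v)

instance (u v : G3) (t : G9) : Decidable (Q u v t) := by unfold Q; infer_instance

lemma keyA : ∀ u v : G3,
    (∃ c d : Fin 3, (c : ℕ) • u + (d : ℕ) • v = ((1 : ZMod 3), (0 : ZMod 3))) →
    (∃ c d : Fin 3, (c : ℕ) • u + (d : ℕ) • v = ((0 : ZMod 3), (1 : ZMod 3))) →
    ∀ j k : Fin 4, j ≠ k → Q u v (wpt j) ∨ Q u v (wpt k) := by decide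

lemma wpt_ne_zero : ∀ j : Fin 4, wpt j ≠ 0 := by decide

lemma nsmul_mem_zmultiples (x : G9) (n : ℕ) : (n : ℕ) • x ∈ AddSubgroup.zmultiples x := by
  rw [AddSubgroup.mem_zmultiples_iff]
  exact ⟨(n : ℤ), natCast_zsmul x n⟩

lemma Qmem (x y t : G9) (h : Q (Fred x) (Fred y) t) : t ∈ ASigma x y := by
  have hx : iot (Fred x) = (3 : ℕ) • x := iot_Fred x
  have hy : iot (Fred y) = (3 : ℕ) • y := iot_Fred y
  have hxy : iot (Fred x + Fred y) = (3 : ℕ) • (x + y) := by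
    rw [← map_add]; exact iot_Fred (x + y)
  have mem3 : ∀ z : G9, (3 : ℕ) • z ∈ AddSubgroup.zmultiples z :=
    fun z => nsmul_mem_zmultiples z 3
  have mem6 : ∀ z : G9, (2 : ℕ) • (3 : ℕ) • z ∈ AddSubgroup.zmultiples z := by
    intro z; rw [smul_smul]; exact nsmul_mem_zmultiples z 6
  rcases h with h | h | h | h | h | h
  · exact Or.inl (Or.inl (by rw [h, hx]; exact mem3 x))
  · exact Or.inl (Or.inl (by rw [h, hx]; exact mem6 x))
  · exact Or.inl (Or.inr (by rw [h, hy]; exact mem3 y))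
  · exact Or.inl (Or.inr (by rw [h, hy]; exact mem6 y))
  · exact Or.inr (by rw [h, hxy]; exact mem3 (x + y))
  · exact Or.inr (by rw [h, hxy]; exact mem6 (x + y))

lemma gen_combo (x y : G9) (h : AddSubgroup.closure {x, y} = ⊤) (t : G3) (t9 : G9)
    (ht : Fred t9 = t) :
    ∃ c d : Fin 3, (c : ℕ) • Fred x + (d : ℕ) • Fred y = t := by
  have hmem : t9 ∈ AddSubgroup.closure ({x, y} : Set G9) := by
    rw [h]; exact AddSubgroup.mem_top t9
  obtain ⟨m, n, hmn⟩ := AddSubgroup.mem_closure_pair.mp hmem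
  obtain ⟨c, hc⟩ := smul_reduce 3 (by norm_num) (Fred x) (three_zsmul _) m
  obtain ⟨d, hd⟩ := smul_reduce 3 (by norm_num) (Fred y) (three_zsmul _) n
  refine ⟨c, d, ?_⟩
  rw [hc, hd, ← map_zsmul, ← map_zsmul, ← map_add, hmn, ht]

/-- The impossibility of three pairs. -/
lemma part2 (x y : Fin 3 → G9) (hgen : ∀ i, AddSubgroup.closure {x i, y i} = ⊤) :
    ⋂ i, ASigma (x i) (y i) ≠ {(0 : G9)} := by
  intro hinter
  have key : ∀ i : Fin 3, ∀ j k : Fin 4, j ≠ k →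
      wpt j ∈ ASigma (x i) (y i) ∨ wpt k ∈ ASigma (x i) (y i) := by
    intro i j k hjk
    have h1 := gen_combo (x i) (y i) (hgen i) ((1 : ZMod 3), (0 : ZMod 3)) (1, 0) (by decide)
    have h2 := gen_combo (x i) (y i) (hgen i) ((0 : ZMod 3), (1 : ZMod 3)) (0, 1) (by decide)
    rcases keyA (Fred (x i)) (Fred (y i)) h1 h2 j k hjk with h | h
    · exact Or.inl (Qmem _ _ _ h)
    · exact Or.inr (Qmem _ _ _ h)
  by_cases hj : ∃ j : Fin 4, ∀ i : Fin 3, wpt j ∈ ASigma (x i) (y i)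
  · obtain ⟨j, hja⟩ := hj
    have hmem : wpt j ∈ ⋂ i, ASigma (x i) (y i) := Set.mem_iInter.mpr hja
    rw [hinter] at hmem
    exact wpt_ne_zero j hmem
  · push_neg at hj
    choose b hb using hj
    obtain ⟨j, k, hjk, hbjk⟩ := Fintype.exists_ne_map_eq_of_card_lt b (by norm_num)
    rcases key (b j) j k hjk with h | h
    · exact hb j h
    · rw [hbjk] at h
      exact hb k h

/-- The four explicit pairs. -/
def xv : Fin 4 → G9 := ![(0, 1), (0, 1), (0, 1), (1, 0)]
def yv : Fin 4 → G9 := ![(1, 0), (1, 1), (2, 0), (1, 1)]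

lemma gen_aux (a b : G9)
    (h1 : ∃ m n : Fin 9, (m : ℕ) • a + (n : ℕ) • b = ((1 : ZMod 9), (0 : ZMod 9)))
    (h2 : ∃ m n : Fin 9, (m : ℕ) • a + (n : ℕ) • b = ((0 : ZMod 9), (1 : ZMod 9))) :
    AddSubgroup.closure {a, b} = ⊤ := by
  have ha : a ∈ AddSubgroup.closure ({a, b} : Set G9) :=
    AddSubgroup.subset_closure (by simp)
  have hb : b ∈ AddSubgroup.closure ({a, b} : Set G9) :=
    AddSubgroup.subset_closure (by simp)
  obtain ⟨m1, n1, e1⟩ := h1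
  obtain ⟨m2, n2, e2⟩ := h2
  have h10 : ((1, 0) : G9) ∈ AddSubgroup.closure ({a, b} : Set G9) :=
    e1 ▸ add_mem (nsmul_mem ha _) (nsmul_mem hb _)
  have h01 : ((0, 1) : G9) ∈ AddSubgroup.closure ({a, b} : Set G9) :=
    e2 ▸ add_mem (nsmul_mem ha _) (nsmul_mem hb _)
  rw [eq_top_iff]
  rintro ⟨g1, g2⟩ -
  have hg : ((g1, g2) : G9) = g1.val • ((1, 0) : G9) + g2.val • ((0, 1) : G9) := by
    simp [Prod.ext_iff, nsmul_eq_mul, ZMod.natCast_val, ZMod.cast_id]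
  rw [hg]
  exact add_mem (nsmul_mem h10 _) (nsmul_mem h01 _)

lemma keyB : ∀ g : G9, (∀ i : Fin 4, SigP (xv i) (yv i) g) → g = 0 := by decide

lemma part1 : ∃ x y : Fin 4 → G9,
    (∀ i, AddSubgroup.closure {x i, y i} = ⊤) ∧
    ⋂ i, ASigma (x i) (y i) = {(0 : G9)} := by
  refine ⟨xv, yv, ?_, ?_⟩
  · intro i
    fin_cases i <;> apply gen_aux <;> first
      | exact ⟨0, 1, by decide⟩ | exact ⟨1, 0, by decide⟩ | exact ⟨8, 1, by decide⟩
      | exact ⟨0, 5, by decide⟩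
  · apply Set.eq_singleton_iff_unique_mem.mpr
    constructor
    · refine Set.mem_iInter.mpr fun i => Set.mem_union_left _ (Set.mem_union_left _ ?_)
      exact (AddSubgroup.zmultiples _).zero_mem
    · intro g hg
      exact keyB g fun i => (mem_ASigma_iff _ _ _).mp (Set.mem_iInter.mp hg i)

end Aux

theorem stmt15 :
    (∃ x y : Fin 4 → ZMod 9 × ZMod 9,
      (∀ i, AddSubgroup.closure {x i, y i} = ⊤) ∧
      ⋂ i, ASigma (x i) (y i) = {(0 : ZMod 9 × ZMod 9)}) ∧
    (∀ x y : Fin 3 → ZMod 9 × ZMod 9,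
      (∀ i, AddSubgroup.closure {x i, y i} = ⊤) →
      ⋂ i, ASigma (x i) (y i) ≠ {(0 : ZMod 9 × ZMod 9)}) := by
  exact ⟨part1, part2⟩
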